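/- (Gowers) Let G be a finite group of order n, and let δ > 0 be a real number such that every nonzero finite-dimensional real representation of G having no nonzero G-invariant vector has dimension at least δ. Then every product-free subset S of G satisfies (#S)³ · δ ≤ n³; that is, β(G) ≤ δ^{−1/3}. -/

import Mathlib

open Matrix Finset
open scoped RealInnerProductSpace

/-- A subset `S` of a group is product-free if there are no `a, b, c ∈ S`
(not necessarily distinct) with `a * b = c`. -/
def IsProductFree {G : Type*} [Group G] (S : Finset G) : Prop :=
  ∀ a ∈ S, ∀ b ∈ S, ∀ c ∈ S, a * b ≠ c

noncomputable def toE {G : Type} [Fintype G] (v : G → ℝ) : EuclideanSpace ℝ G := WithLp.toLp 2 v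

noncomputable def fromE {G : Type} [Fintype G] (v : EuclideanSpace ℝ G) : G → ℝ := WithLp.ofLp v

noncomputable def rightRep (G : Type) [Group G] : Representation ℝ G (G → ℝ) where
  toFun g :=
    { toFun := fun f x => f (x * g)
      map_add' := fun _ _ => rfl
      map_smul' := fun _ _ => rfl }
  map_one' := by ext f x; simp
  map_mul' g h := by
    ext f x
    simp [Module.End.mul_apply, mul_assoc]

noncomputable def subRep {G : Type} [Group G] (W : Submodule ℝ (G → ℝ))
    (h : ∀ g : G, ∀ v ∈ W, rightRep G g v ∈ W) : Representation ℝ G W where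
  toFun g := (rightRep G g).restrict (h g)
  map_one' := by
    ext v
    simp [LinearMap.restrict_apply, rightRep]
  map_mul' g k := by
    ext v
    simp [LinearMap.restrict_apply, rightRep, Module.End.mul_apply, mul_assoc]

noncomputable def ESub {G : Type} [Fintype G] (N : Matrix G G ℝ) (l : ℝ) :
    Submodule ℝ (G → ℝ) where
  carrier := {v | N *ᵥ v = l • v ∧ ∑ x, v x = 0}
  add_mem' := by
    rintro a b ⟨ha1, ha2⟩ ⟨hb1, hb2⟩
    refine ⟨?_, ?_⟩
    · rw [Matrix.mulVec_add, ha1, hb1, smul_add]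
    · simp [Finset.sum_add_distrib, ha2, hb2]
  zero_mem' := ⟨by simp, by simp⟩
  smul_mem' := by
    rintro c a ⟨h1, h2⟩
    refine ⟨?_, ?_⟩
    · rw [Matrix.mulVec_smul, h1, smul_comm]
    · simp [← Finset.mul_sum, h2]

lemma mem_ESub {G : Type} [Fintype G] {N : Matrix G G ℝ} {l : ℝ} {v : G → ℝ} :
    v ∈ ESub N l ↔ N *ᵥ v = l • v ∧ ∑ x, v x = 0 := Iff.rfl

set_option maxHeartbeats 1600000 in
/-- Gowers: let `G` be a finite group of order `n` such that every nonzero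
finite-dimensional real representation of `G` with no nonzero invariant
vector has dimension at least `δ > 0`. Then every product-free subset `S` of
`G` satisfies `(#S)³ · δ ≤ n³`, i.e. `β(G) ≤ δ^{-1/3}`. -/
theorem gowers_product_free_bound {G : Type} [Group G] [Fintype G]
    (δ : ℝ) (hδ : 0 < δ)
    (hrep : ∀ (V : Type) [AddCommGroup V] [Module ℝ V] [FiniteDimensional ℝ V]
      (ρ : Representation ℝ G V), Nontrivial V →
      (∀ v : V, (∀ g : G, ρ g v = v) → v = 0) →
      δ ≤ Module.finrank ℝ V)
    (S : Finset G) (hS : IsProductFree S) :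
    (S.card : ℝ) ^ 3 * δ ≤ (Fintype.card G : ℝ) ^ 3 := by
  classical
  set n : ℕ := Fintype.card G with hn_def
  have hnpos : 0 < n := Fintype.card_pos
  rcases S.eq_empty_or_nonempty with rfl | hSne
  · have : (0:ℝ) < (n:ℝ)^3 := by positivity
    simpa using this.le
  set s : ℕ := S.card with hs_def
  have hspos : 0 < s := Finset.card_pos.2 hSne
  have hsR : (0:ℝ) < s := by exact_mod_cast hspos
  have hnR : (0:ℝ) < n := by exact_mod_cast hnpos
  -- basic objects
  set ind : G → ℝ := fun g => if g ∈ S then 1 else 0 with hind_def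
  set u : G → ℝ := fun _ => 1 with hu_def
  set M : Matrix G G ℝ := Matrix.of fun x y => ind (x * y⁻¹) with hM_def
  set N : Matrix G G ℝ := Mᴴ * M with hN_def
  have hMapp : ∀ x y, M x y = ind (x * y⁻¹) := fun _ _ => rfl
  have hone : (1:G) ∉ S := fun h => hS 1 h 1 h 1 h (one_mul 1)
  have hindsum : ∑ g, ind g = (s:ℝ) := by
    show (∑ g, if g ∈ S then (1:ℝ) else 0) = (s:ℝ)
    rw [Finset.sum_ite_mem, Finset.univ_inter, Finset.sum_const, hs_def]
    simp
  have hrow : ∀ x, ∑ y, M x y = (s:ℝ) := by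
    intro x
    rw [← hindsum]
    exact Fintype.sum_equiv ((Equiv.inv G).trans (Equiv.mulLeft x))
      (fun y => M x y) ind (fun y => rfl)
  have hcol : ∀ y, ∑ x, M x y = (s:ℝ) := by
    intro y
    rw [← hindsum]
    exact Fintype.sum_equiv (Equiv.mulRight y⁻¹)
      (fun x => M x y) ind (fun x => rfl)
  have hMsq : ∀ x y, M x y * M x y = M x y := by
    intro x y
    simp only [hMapp, hind_def]
    split_ifs <;> ring
  have hMu : M *ᵥ u = (s:ℝ) • u := by
    funext x
    show ∑ y, M x y * u y = (s:ℝ) • u x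
    simp only [hu_def, mul_one, smul_eq_mul]
    rw [hrow x]
  have hMTu : Mᵀ *ᵥ u = (s:ℝ) • u := by
    funext x
    show ∑ y, Mᵀ x y * u y = (s:ℝ) • u x
    simp only [hu_def, mul_one, smul_eq_mul, Matrix.transpose_apply]
    rw [hcol x]
  have hNh : N.IsHermitian := Matrix.isHermitian_conjTranspose_mul_self M
  have hNT : Nᵀ = N := by
    ext x y
    rw [Matrix.transpose_apply]
    conv_rhs => rw [← hNh]
    simp [Matrix.conjTranspose_apply]
  have hMH : Mᴴ = Mᵀ := by
    ext x y
    simp [Matrix.conjTranspose_apply]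
  have hNu : N *ᵥ u = ((s:ℝ) * s) • u := by
    rw [hN_def, ← Matrix.mulVec_mulVec, hMu, Matrix.mulVec_smul, hMH, hMTu, smul_smul]
  -- symmetric bilinear identities
  have hdotT : ∀ (A : Matrix G G ℝ) (v w : G → ℝ), v ⬝ᵥ (A *ᵥ w) = (Aᵀ *ᵥ v) ⬝ᵥ w := by
    intro A v w
    rw [Matrix.dotProduct_mulVec, Matrix.mulVec_transpose]
  have hNdot : ∀ v : G → ℝ, v ⬝ᵥ (N *ᵥ v) = (M *ᵥ v) ⬝ᵥ (M *ᵥ v) := by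
    intro v
    rw [hN_def, hMH, ← Matrix.mulVec_mulVec, hdotT Mᵀ v (M *ᵥ v), Matrix.transpose_transpose]
  have hNsym : ∀ v w : G → ℝ, v ⬝ᵥ (N *ᵥ w) = (N *ᵥ v) ⬝ᵥ w := by
    intro v w
    rw [hdotT N v w, hNT]
  -- f
  set f : G → ℝ := ind - ((s:ℝ)/(n:ℝ)) • u with hf_def
  have hfsum : ∑ x, f x = 0 := by
    have h1 : ∑ x, f x = (s:ℝ) - ((s:ℝ)/n) * n := by
      simp only [hf_def, Pi.sub_apply, Pi.smul_apply, hu_def, smul_eq_mul, mul_one,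
        Finset.sum_sub_distrib, hindsum, Finset.sum_const, Finset.card_univ, nsmul_eq_mul]
      ring
    rw [h1]
    field_simp
    simp
  have hfu : u ⬝ᵥ f = 0 := by
    show ∑ x, u x * f x = 0
    simp only [hu_def, one_mul]
    exact hfsum
  have hfu' : f ⬝ᵥ u = 0 := by
    rw [dotProduct_comm]
    exact hfu
  have hP : ind ⬝ᵥ (M *ᵥ ind) = 0 := by
    show ∑ x, ind x * (∑ y, M x y * ind y) = 0
    refine Finset.sum_eq_zero fun x _ => ?_
    rw [Finset.mul_sum]
    refine Finset.sum_eq_zero fun y _ => ?_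
    by_cases hx : x ∈ S
    · by_cases hy : y ∈ S
      · by_cases hxy : x * y⁻¹ ∈ S
        · exact absurd (inv_mul_cancel_right x y) (hS (x * y⁻¹) hxy y hy x hx)
        · simp [hMapp, hind_def, hxy]
      · simp [hind_def, hy]
    · simp [hind_def, hx]
  have huu : u ⬝ᵥ u = (n:ℝ) := by
    show ∑ x, u x * u x = (n:ℝ)
    simp [hu_def, Finset.card_univ, hn_def]
  have hind_eq : ind = f + ((s:ℝ)/n) • u := by
    rw [hf_def, sub_add_cancel]
  have huMf : u ⬝ᵥ (M *ᵥ f) = 0 := by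
    rw [hdotT M u f, hMTu, smul_dotProduct, hfu, smul_zero]
  have hMf : f ⬝ᵥ (M *ᵥ f) = -((s:ℝ)^3 / n) := by
    have hexp : ind ⬝ᵥ (M *ᵥ ind)
        = f ⬝ᵥ (M *ᵥ f) + ((s:ℝ)/n) * (((s:ℝ)/n) * ((s:ℝ) * (n:ℝ))) := by
      conv_lhs => rw [hind_eq]
      simp only [Matrix.mulVec_add, Matrix.mulVec_smul, hMu, add_dotProduct,
        smul_dotProduct, dotProduct_add, dotProduct_smul,
        smul_eq_mul, hfu', huMf, huu, mul_zero, add_zero, zero_add]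
      ring
    rw [hP] at hexp
    have hne : (n:ℝ) ≠ 0 := ne_of_gt hnR
    field_simp at hexp ⊢
    have h2 : (f ⬝ᵥ (M *ᵥ f) * (n:ℝ)) * (n:ℝ) = (-(s:ℝ)^3) * (n:ℝ) := by
      linear_combination (-(n:ℝ)) * hexp
    have h3 := mul_right_cancel₀ hne h2
    linarith
  have hii : ind ⬝ᵥ ind = (s:ℝ) := by
    show ∑ g, ind g * ind g = (s:ℝ)
    rw [← hindsum]
    refine Finset.sum_congr rfl fun g _ => ?_
    simp only [hind_def]
    split_ifs <;> ring
  have hui : u ⬝ᵥ ind = (s:ℝ) := by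
    show ∑ g, u g * ind g = (s:ℝ)
    simp only [hu_def, one_mul]
    exact hindsum
  have hiu : ind ⬝ᵥ u = (s:ℝ) := by
    rw [dotProduct_comm]
    exact hui
  have hff : f ⬝ᵥ f = (s:ℝ) - (s:ℝ)^2/n := by
    have : f ⬝ᵥ f = ind ⬝ᵥ ind - ((s:ℝ)/n) * (u ⬝ᵥ ind) - (((s:ℝ)/n) * (ind ⬝ᵥ u)
        - ((s:ℝ)/n) * (((s:ℝ)/n) * (u ⬝ᵥ u))) := by
      rw [hf_def, sub_dotProduct, dotProduct_sub, dotProduct_sub,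
        smul_dotProduct, smul_dotProduct, dotProduct_smul,
        dotProduct_smul]
      simp only [smul_eq_mul]
      ring
    rw [this, hii, hui, hiu, huu]
    field_simp
    ring
  have hsltn : (s:ℝ) < n := by
    have : S ⊂ Finset.univ := Finset.ssubset_univ_iff.2 fun h => hone (h ▸ Finset.mem_univ 1)
    have := Finset.card_lt_card this
    rw [Finset.card_univ] at this
    exact_mod_cast this
  have hffpos : 0 < f ⬝ᵥ f := by
    rw [hff]
    have heq : (s:ℝ) - (s:ℝ)^2/n = (s:ℝ)*((n:ℝ)-(s:ℝ))/n := by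
      field_simp
    rw [heq]
    exact div_pos (mul_pos hsR (sub_pos.2 hsltn)) hnR
  -- spectral theory
  set b := hNh.eigenvectorBasis with hb_def
  set μ := hNh.eigenvalues with hmu_def
  have hNb : ∀ i, N *ᵥ ⇑(b i) = μ i • ⇑(b i) := fun i => hNh.mulVec_eigenvectorBasis i
  have hmu_nonneg : ∀ i, 0 ≤ μ i := fun i =>
    Matrix.eigenvalues_conjTranspose_mul_self_nonneg M i
  -- bridges between inner and dotProduct
  have hbr0 : ∀ v w : G → ℝ, ⟪toE v, toE w⟫ = v ⬝ᵥ w := by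
    intro v w; simp [toE, PiLp.inner_apply, dotProduct, mul_comm]
  have hbr1 : ∀ (i : G) (w : G → ℝ), ⟪b i, toE w⟫ = (b i : G → ℝ) ⬝ᵥ w := by
    intro i w; simp [toE, PiLp.inner_apply, dotProduct, mul_comm]
  have hbr2 : ∀ (i : G) (w : G → ℝ), ⟪toE w, b i⟫ = (b i : G → ℝ) ⬝ᵥ w := by
    intro i w
    rw [real_inner_comm]; exact hbr1 i w
  have hbb : ∀ i j, (b i : G → ℝ) ⬝ᵥ (b j : G → ℝ) = if i = j then 1 else 0 := by
    intro i j
    have h := (orthonormal_iff_ite.mp b.orthonormal) i j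
    simpa [PiLp.inner_apply, dotProduct, mul_comm] using h
  have hPar : ∀ v : G → ℝ, ∑ i, ((b i : G → ℝ) ⬝ᵥ v) * ((b i : G → ℝ) ⬝ᵥ v) = v ⬝ᵥ v := by
    intro v
    have h := b.sum_inner_mul_inner (toE v) (toE v)
    rw [hbr0] at h
    rw [← h]
    refine Finset.sum_congr rfl fun i _ => ?_
    rw [hbr1, hbr2]
  have hmu_eq : ∀ i, μ i = (b i : G → ℝ) ⬝ᵥ (N *ᵥ (b i : G → ℝ)) := by
    intro i
    rw [show N *ᵥ (b i : G → ℝ) = μ i • (b i : G → ℝ) from hNb i,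
      dotProduct_smul, hbb i i]
    simp
  have hsum_mu : ∑ i, μ i = (n:ℝ) * s := by
    have hstep : ∀ i, μ i = ∑ x, ((b i : G → ℝ) ⬝ᵥ M x) * ((b i : G → ℝ) ⬝ᵥ M x) := by
      intro i
      rw [hmu_eq i, hNdot]
      show (∑ x, (M *ᵥ (b i : G → ℝ)) x * (M *ᵥ (b i : G → ℝ)) x) = _
      refine Finset.sum_congr rfl fun x _ => ?_
      rw [show (M *ᵥ (b i : G → ℝ)) x = M x ⬝ᵥ (b i : G → ℝ) from rfl,
        dotProduct_comm]
    calc ∑ i, μ i = ∑ i, ∑ x, ((b i : G → ℝ) ⬝ᵥ M x) * ((b i : G → ℝ) ⬝ᵥ M x) :=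
          Finset.sum_congr rfl fun i _ => hstep i
      _ = ∑ x, ∑ i, ((b i : G → ℝ) ⬝ᵥ M x) * ((b i : G → ℝ) ⬝ᵥ M x) := Finset.sum_comm
      _ = ∑ x : G, M x ⬝ᵥ M x := Finset.sum_congr rfl fun x _ => hPar (M x)
      _ = ∑ x : G, (s:ℝ) := by
          refine Finset.sum_congr rfl fun x _ => ?_
          show (∑ y, M x y * M x y) = (s:ℝ)
          rw [← hrow x]
          exact Finset.sum_congr rfl fun y _ => hMsq x y
      _ = (n:ℝ) * s := by
          rw [Finset.sum_const, Finset.card_univ, nsmul_eq_mul]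
  -- choose dominant eigenvalue
  have hJne : (Finset.univ.filter fun i => (b i : G → ℝ) ⬝ᵥ f ≠ 0).Nonempty := by
    by_contra h
    rw [Finset.not_nonempty_iff_eq_empty, Finset.filter_eq_empty_iff] at h
    have h0 : f ⬝ᵥ f = 0 := by
      rw [← hPar f]
      refine Finset.sum_eq_zero fun i _ => ?_
      have := h (Finset.mem_univ i)
      rw [not_ne_iff] at this
      rw [this, mul_zero]
    linarith [hffpos]
  obtain ⟨i₀, hi₀J, hmax⟩ :=
    Finset.exists_max_image (Finset.univ.filter fun i => (b i : G → ℝ) ⬝ᵥ f ≠ 0) μ hJne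
  set lam := μ i₀ with hlam_def
  have hlam0 : 0 ≤ lam := hmu_nonneg i₀
  have hNfi : ∀ i, (b i : G → ℝ) ⬝ᵥ (N *ᵥ f) = μ i * ((b i : G → ℝ) ⬝ᵥ f) := by
    intro i
    rw [hNsym (b i : G → ℝ) f, show N *ᵥ (b i : G → ℝ) = μ i • (b i : G → ℝ) from hNb i,
      smul_dotProduct]
    simp
  have hspec : f ⬝ᵥ (N *ᵥ f) ≤ lam * (f ⬝ᵥ f) := by
    have hexp1 : f ⬝ᵥ (N *ᵥ f) = ∑ i, μ i * (((b i : G → ℝ) ⬝ᵥ f) * ((b i : G → ℝ) ⬝ᵥ f)) := by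
      have h := b.sum_inner_mul_inner (toE f) (toE (N *ᵥ f))
      rw [hbr0] at h
      rw [← h]
      refine Finset.sum_congr rfl fun i _ => ?_
      rw [hbr1, hbr2, hNfi i]
      ring
    have hexp2 : f ⬝ᵥ f = ∑ i, ((b i : G → ℝ) ⬝ᵥ f) * ((b i : G → ℝ) ⬝ᵥ f) := (hPar f).symm
    rw [hexp1, hexp2, Finset.mul_sum]
    refine Finset.sum_le_sum fun i _ => ?_
    by_cases hc : (b i : G → ℝ) ⬝ᵥ f = 0
    · simp [hc]
    · have hle : μ i ≤ lam := hmax i (Finset.mem_filter.2 ⟨Finset.mem_univ i, hc⟩)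
      have hnn : 0 ≤ ((b i : G → ℝ) ⬝ᵥ f) * ((b i : G → ℝ) ⬝ᵥ f) := mul_self_nonneg _
      nlinarith
  -- the subrepresentation
  set W : Submodule ℝ (G → ℝ) := ESub N lam with hW_def
  have hNinv : ∀ (x y g : G), N (x*g) (y*g) = N x y := by
    intro x y g
    have hent : ∀ a c : G, N a c = ∑ z, M z a * M z c := by
      intro a c
      rw [hN_def, Matrix.mul_apply]
      refine Finset.sum_congr rfl fun z _ => ?_
      rw [Matrix.conjTranspose_apply, star_trivial]
    rw [hent, hent]
    refine (Fintype.sum_equiv (Equiv.mulRight g) _ _ fun z => ?_).symm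
    show M z x * M z y = M (z*g) (x*g) * M (z*g) (y*g)
    have h1 : M (z*g) (x*g) = M z x := by
      simp only [hMapp, _root_.mul_inv_rev]
      congr 1
      group
    have h2 : M (z*g) (y*g) = M z y := by
      simp only [hMapp, _root_.mul_inv_rev]
      congr 1
      group
    rw [h1, h2]
  have hsum_shift : ∀ (g : G) (v : G → ℝ), ∑ x, v (x*g) = ∑ x, v x := by
    intro g v
    exact Fintype.sum_equiv (Equiv.mulRight g) _ _ fun x => rfl
  have hcomm : ∀ (g : G) (v : G → ℝ), N *ᵥ (fun x => v (x*g)) = fun x => (N *ᵥ v) (x*g) := by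
    intro g v
    funext x
    show ∑ y, N x y * v (y*g) = ∑ z, N (x*g) z * v z
    refine Fintype.sum_equiv (Equiv.mulRight g) _ _ fun y => ?_
    show N x y * v (y*g) = N (x*g) (y*g) * v (y*g)
    rw [hNinv x y g]
  have hWinv : ∀ g : G, ∀ v ∈ W, rightRep G g v ∈ W := by
    intro g v hv
    obtain ⟨hv1, hv2⟩ := (mem_ESub).1 hv
    refine (mem_ESub).2 ⟨?_, ?_⟩
    · show N *ᵥ (fun x => v (x*g)) = lam • (fun x => v (x*g))
      rw [hcomm g v, hv1]
      funext x
      simp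
    · show ∑ x, v (x*g) = 0
      rw [hsum_shift g v]
      exact hv2
  set w : G → ℝ := fromE (b i₀) - ((u ⬝ᵥ fromE (b i₀))/n) • u with hw_def
  have hB0 : N *ᵥ fromE (b i₀) = lam • fromE (b i₀) := hNb i₀
  have hwmem : w ∈ W := by
    set c : ℝ := u ⬝ᵥ fromE (b i₀) with hc_def
    refine (mem_ESub).2 ⟨?_, ?_⟩
    · rw [hw_def, Matrix.mulVec_sub, hB0, Matrix.mulVec_smul, hNu, smul_sub,
        smul_smul, smul_smul]
      congr 1
      have hkey : c * ((s:ℝ) * s) = c * lam := by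
        by_cases hc0 : c = 0
        · rw [hc0, zero_mul, zero_mul]
        · have h1 : u ⬝ᵥ (N *ᵥ fromE (b i₀)) = lam * c := by
            rw [hB0, dotProduct_smul, smul_eq_mul]
          have h2 : u ⬝ᵥ (N *ᵥ fromE (b i₀)) = ((s:ℝ) * s) * c := by
            rw [hNsym u (fromE (b i₀)), hNu, smul_dotProduct, smul_eq_mul]
          have h3 : lam = (s:ℝ) * s := mul_left_cancel₀ hc0
            (by rw [mul_comm c lam, mul_comm c ((s:ℝ)*s), ← h1, ← h2])
          rw [h3]
      calc (c / (n:ℝ) * ((s:ℝ) * s)) • u = (c * ((s:ℝ)*s) / n) • u := by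
            congr 1
            ring
        _ = (c * lam / n) • u := by rw [hkey]
        _ = (lam * (c / n)) • u := by
            congr 1
            ring
    · show ∑ x, (fromE (b i₀) x - (c/(n:ℝ)) * u x) = 0
      have hcsum : c = ∑ x, fromE (b i₀) x := by
        rw [hc_def]
        show ∑ x, u x * fromE (b i₀) x = _
        simp [hu_def]
      simp only [hu_def, mul_one, Finset.sum_sub_distrib, Finset.sum_const,
        Finset.card_univ, nsmul_eq_mul]
      rw [← hcsum]
      field_simp
      simp [hn_def]
  have hwne : w ≠ 0 := by
    intro h0
    have hi0 : (b i₀ : G → ℝ) ⬝ᵥ f ≠ 0 := (Finset.mem_filter.1 hi₀J).2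
    have hwf : w ⬝ᵥ f = (b i₀ : G → ℝ) ⬝ᵥ f := by
      rw [hw_def, sub_dotProduct, smul_dotProduct, hfu, smul_zero, sub_zero]
      rfl
    rw [h0, zero_dotProduct] at hwf
    exact hi0 hwf.symm
  have hWnontriv : Nontrivial W := by
    refine nontrivial_of_ne ⟨w, hwmem⟩ 0 fun h => hwne ?_
    simpa using congrArg Subtype.val h
  have hWnoinv : ∀ v : W, (∀ g : G, subRep W hWinv g v = v) → v = 0 := by
    intro v hv
    have h1 : ∀ g : G, rightRep G g (v : G → ℝ) = (v : G → ℝ) :=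
      fun g => congrArg Subtype.val (hv g)
    have h2 : ∀ g : G, (v : G → ℝ) g = (v : G → ℝ) 1 := by
      intro g
      have := congrFun (h1 g) 1
      simpa [rightRep, one_mul] using this
    have hv2 : ∑ x, (v : G → ℝ) x = 0 := ((mem_ESub).1 v.2).2
    have h3 : ∑ x, (v : G → ℝ) x = (n:ℝ) * (v : G → ℝ) 1 := by
      rw [Finset.sum_congr rfl fun x _ => h2 x, Finset.sum_const, Finset.card_univ,
        nsmul_eq_mul]
    have h4 : (v : G → ℝ) 1 = 0 := by
      rw [h3] at hv2
      exact (mul_eq_zero.1 hv2).resolve_left (ne_of_gt hnR)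
    apply Subtype.ext
    funext g
    rw [h2 g, h4]
    rfl
  have hdim : δ ≤ Module.finrank ℝ W := hrep W (subRep W hWinv) hWnontriv hWnoinv
  have hcard : (Module.finrank ℝ W : ℝ) ≤ ((Finset.univ.filter fun i => μ i = lam).card : ℝ) := by
    set F : Finset G := Finset.univ.filter fun i => μ i = lam with hF_def
    set F' : Finset (G → ℝ) := F.image fun i => fromE (b i) with hF'_def
    have hWle : W ≤ Submodule.span ℝ (F' : Set (G → ℝ)) := by
      intro v hv
      obtain ⟨hv1, hv2⟩ := (mem_ESub).1 hv
      have hrepr : v = ∑ i, ((b i : G → ℝ) ⬝ᵥ v) • fromE (b i) := by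
        have h := b.sum_repr' (toE v)
        calc v = fromE (toE v) := rfl
          _ = fromE (∑ i, ⟪b i, toE v⟫ • b i) := by rw [h]
          _ = ∑ i, ((b i : G → ℝ) ⬝ᵥ v) • fromE (b i) := by
              simp only [hbr1]
              simp [fromE, WithLp.ofLp_sum, WithLp.ofLp_smul]
      rw [hrepr]
      refine Submodule.sum_mem _ fun i _ => ?_
      by_cases hci : (b i : G → ℝ) ⬝ᵥ v = 0
      · rw [hci, zero_smul]
        exact Submodule.zero_mem _
      · have hmui : μ i = lam := by
          have ha : (b i : G → ℝ) ⬝ᵥ (N *ᵥ v) = lam * ((b i : G → ℝ) ⬝ᵥ v) := by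
            rw [hv1, dotProduct_smul, smul_eq_mul]
          have hb2 : (b i : G → ℝ) ⬝ᵥ (N *ᵥ v) = μ i * ((b i : G → ℝ) ⬝ᵥ v) := by
            rw [hNsym (b i : G → ℝ) v,
              show N *ᵥ (b i : G → ℝ) = μ i • (b i : G → ℝ) from hNb i,
              smul_dotProduct, smul_eq_mul]
          exact mul_right_cancel₀ hci (hb2.symm.trans ha)
        refine Submodule.smul_mem _ _ (Submodule.subset_span ?_)
        rw [hF'_def]
        simp only [Finset.coe_image, Set.mem_image, Finset.mem_coe]
        exact ⟨i, by simp [hF_def, hmui], rfl⟩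
    have h1 : Module.finrank ℝ W ≤ Module.finrank ℝ (Submodule.span ℝ (F' : Set (G → ℝ))) :=
      Submodule.finrank_mono hWle
    have h2 : Module.finrank ℝ (Submodule.span ℝ (F' : Set (G → ℝ))) ≤ F'.card :=
      finrank_span_finset_le_card F'
    have h3 : F'.card ≤ F.card := Finset.card_image_le
    exact_mod_cast le_trans h1 (le_trans h2 h3)
  have hld : lam * δ ≤ (n:ℝ) * s := by
    have h1 : lam * δ ≤ lam * (Module.finrank ℝ W : ℝ) :=
      mul_le_mul_of_nonneg_left hdim hlam0
    have h2 : lam * (Module.finrank ℝ W : ℝ)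
        ≤ lam * ((Finset.univ.filter fun i => μ i = lam).card : ℝ) :=
      mul_le_mul_of_nonneg_left hcard hlam0
    have h3 : lam * ((Finset.univ.filter fun i => μ i = lam).card : ℝ)
        = ∑ i ∈ Finset.univ.filter fun i => μ i = lam, μ i := by
      rw [Finset.sum_congr rfl fun i hi => (Finset.mem_filter.1 hi).2,
        Finset.sum_const, nsmul_eq_mul, mul_comm]
    have h4 : ∑ i ∈ Finset.univ.filter fun i => μ i = lam, μ i ≤ ∑ i, μ i :=
      Finset.sum_le_sum_of_subset_of_nonneg (Finset.filter_subset _ _)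
        fun i _ _ => hmu_nonneg i
    rw [hsum_mu] at h4
    linarith
  -- Cauchy–Schwarz and conclusion
  have hCS : (f ⬝ᵥ (M *ᵥ f)) * (f ⬝ᵥ (M *ᵥ f)) ≤ (f ⬝ᵥ f) * ((M *ᵥ f) ⬝ᵥ (M *ᵥ f)) := by
    have h := real_inner_mul_inner_self_le (toE f) (toE (M *ᵥ f))
    rwa [hbr0, hbr0, hbr0] at h
  have hffs : f ⬝ᵥ f ≤ (s:ℝ) := by
    rw [hff]
    have : 0 ≤ (s:ℝ)^2/n := div_nonneg (sq_nonneg _) hnR.le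
    linarith
  have key : ((s:ℝ)^3/n) * ((s:ℝ)^3/n) ≤ lam * ((s:ℝ) * (s:ℝ)) := by
    have hA : (f ⬝ᵥ (M *ᵥ f)) * (f ⬝ᵥ (M *ᵥ f)) = ((s:ℝ)^3/n) * ((s:ℝ)^3/n) := by
      rw [hMf]
      ring
    rw [hNdot f] at hspec
    have le1 : ((s:ℝ)^3/n) * ((s:ℝ)^3/n) ≤ (f ⬝ᵥ f) * ((M *ᵥ f) ⬝ᵥ (M *ᵥ f)) := by
      rw [← hA]
      exact hCS
    have le2 : (f ⬝ᵥ f) * ((M *ᵥ f) ⬝ᵥ (M *ᵥ f)) ≤ (f ⬝ᵥ f) * (lam * (f ⬝ᵥ f)) :=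
      mul_le_mul_of_nonneg_left hspec hffpos.le
    have hffsq : (f ⬝ᵥ f) * (f ⬝ᵥ f) ≤ (s:ℝ) * (s:ℝ) :=
      mul_le_mul hffs hffs hffpos.le hsR.le
    have le3 : (f ⬝ᵥ f) * (lam * (f ⬝ᵥ f)) ≤ lam * ((s:ℝ) * (s:ℝ)) := by
      have := mul_le_mul_of_nonneg_left hffsq hlam0
      calc (f ⬝ᵥ f) * (lam * (f ⬝ᵥ f)) = lam * ((f ⬝ᵥ f) * (f ⬝ᵥ f)) := by ring
        _ ≤ lam * ((s:ℝ) * (s:ℝ)) := this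
    linarith
  have h7 : δ * ((s:ℝ)^3 * (s:ℝ)^3) ≤ ((n:ℝ)^3) * ((s:ℝ)^3) := by
    have hne : (n:ℝ) ≠ 0 := ne_of_gt hnR
    have e1 : (s:ℝ)^3 * (s:ℝ)^3 ≤ lam * ((s:ℝ) * (s:ℝ)) * ((n:ℝ) * (n:ℝ)) := by
      have hmul := mul_le_mul_of_nonneg_right key (le_of_lt (mul_pos hnR hnR))
      have heq : (s:ℝ)^3 * (s:ℝ)^3 = ((s:ℝ)^3/n) * ((s:ℝ)^3/n) * ((n:ℝ) * (n:ℝ)) := by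
        field_simp
      rw [heq]
      exact hmul
    calc δ * ((s:ℝ)^3 * (s:ℝ)^3) ≤ δ * (lam * ((s:ℝ) * (s:ℝ)) * ((n:ℝ) * (n:ℝ))) :=
          mul_le_mul_of_nonneg_left e1 hδ.le
      _ = (lam * δ) * (((s:ℝ) * (s:ℝ)) * ((n:ℝ) * (n:ℝ))) := by ring
      _ ≤ ((n:ℝ) * (s:ℝ)) * (((s:ℝ) * (s:ℝ)) * ((n:ℝ) * (n:ℝ))) :=
          mul_le_mul_of_nonneg_right hld (mul_nonneg (mul_nonneg hsR.le hsR.le) (mul_nonneg hnR.le hnR.le))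
      _ = ((n:ℝ)^3) * ((s:ℝ)^3) := by ring
  have hfin : ((s:ℝ)^3 * δ) * (s:ℝ)^3 ≤ ((n:ℝ)^3) * ((s:ℝ)^3) := by
    rw [show ((s:ℝ)^3*δ)*(s:ℝ)^3 = δ*((s:ℝ)^3*(s:ℝ)^3) from by ring]
    exact h7
  exact le_of_mul_le_mul_right hfin (pow_pos hsR 3)
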